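/- Let (X,E) be a finite connected graph with edge weights b : E → (0,∞) satisfying b(e) = b(ē), and A the weighted Laplacian with quadratic form Q(f) = (1/2)Σ_{(x,y)∈E} b(x,y)|f(x)−f(y)|². Suppose Γ is a family of paths, one path γ_{x,y} joining each ordered pair (x,y) ∈ X×X, such that (i) each path has weighted length |γ_{x,y}| = Σ_{edges e of γ} b(e)^{-1} ≤ α d, and (ii) every edge e lies on at most β d |X| of the paths in Γ, where d is the diameter of X in the weighted path metric. Then the first non-zero eigenvalue μ_1 of A satisfies μ_1 ≥ 1/(α β d²). -/

import Mathlib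

open Finset

/-- Sum of a nonneg function over a finset whose elements all appear in a list is at most
the sum over the list. -/
lemma aux_sum_finset_le_list_sum {A : Type*} [DecidableEq A] (f : A → ℝ) :
    ∀ (l : List A), (∀ e ∈ l, 0 ≤ f e) → ∀ (s : Finset A), (∀ e ∈ s, e ∈ l) →
      ∑ e ∈ s, f e ≤ (l.map f).sum := by
  intro l hl s hs
  have h1 : ∑ e ∈ s, f e ≤ ∑ e ∈ l.toFinset, f e := by
    apply Finset.sum_le_sum_of_subset_of_nonneg
    · intro e he; exact List.mem_toFinset.mpr (hs e he)
    · intro e he _; exact hl e (List.mem_toFinset.mp he)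
  refine h1.trans ?_
  clear h1 hs s
  induction l with
  | nil => simp
  | cons a t ih =>
    have hta : ∀ e ∈ t, 0 ≤ f e := fun e he => hl e (List.mem_cons_of_mem _ he)
    rw [List.toFinset_cons, List.map_cons, List.sum_cons]
    by_cases h : a ∈ t.toFinset
    · rw [Finset.insert_eq_self.mpr h]
      have := ih hta
      have ha : 0 ≤ f a := hl a List.mem_cons_self
      linarith
    · rw [Finset.sum_insert h]
      exact add_le_add (le_refl _) (ih hta)

/-- Cauchy–Schwarz: (∑ u)² ≤ (∑ w⁻¹)(∑ w u²) for positive weights w. -/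
lemma aux_cs {A : Type*} (s : Finset A) (w u : A → ℝ) (hw : ∀ e ∈ s, 0 < w e)
    (hu : ∀ e ∈ s, 0 ≤ u e) :
    (∑ e ∈ s, u e) ^ 2 ≤ (∑ e ∈ s, (w e)⁻¹) * (∑ e ∈ s, w e * (u e) ^ 2) := by
  have h := Finset.sum_mul_sq_le_sq_mul_sq s (fun e => Real.sqrt (w e)⁻¹)
      (fun e => Real.sqrt (w e) * u e)
  have h1 : ∑ e ∈ s, Real.sqrt (w e)⁻¹ * (Real.sqrt (w e) * u e) = ∑ e ∈ s, u e := by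
    refine Finset.sum_congr rfl fun e he => ?_
    have hwe := hw e he
    rw [Real.sqrt_inv, ← mul_assoc, inv_mul_cancel₀ (Real.sqrt_ne_zero'.mpr hwe), one_mul]
  have h2 : ∑ e ∈ s, (Real.sqrt (w e)⁻¹) ^ 2 = ∑ e ∈ s, (w e)⁻¹ := by
    refine Finset.sum_congr rfl fun e he => ?_
    exact Real.sq_sqrt (inv_nonneg.mpr (hw e he).le)
  have h3 : ∑ e ∈ s, (Real.sqrt (w e) * u e) ^ 2 = ∑ e ∈ s, w e * (u e) ^ 2 := by
    refine Finset.sum_congr rfl fun e he => ?_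
    rw [mul_pow, Real.sq_sqrt (hw e he).le]
  rw [h1, h2, h3] at h
  exact h

lemma aux_walk_norm_le {X : Type*} {G : SimpleGraph X} (φ : X → ℂ)
    (D1 : Sym2 X → ℝ) (hD1 : ∀ u v : X, D1 s(u, v) = ‖φ u - φ v‖)
    {x y : X} (w : G.Walk x y) :
    ‖φ x - φ y‖ ≤ (w.edges.map D1).sum := by
  induction w with
  | nil => simp
  | @cons u v z h p ih =>
    rw [SimpleGraph.Walk.edges_cons, List.map_cons, List.sum_cons, hD1]
    calc ‖φ u - φ z‖ = ‖(φ u - φ v) + (φ v - φ z)‖ := by ring_nf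
    _ ≤ ‖φ u - φ v‖ + ‖φ v - φ z‖ := norm_add_le _ _
    _ ≤ ‖φ u - φ v‖ + (p.edges.map D1).sum := add_le_add (le_refl _) ih

lemma aux_double_sum_eq {X : Type*} [Fintype X] [DecidableEq X]
    (G : SimpleGraph X) [DecidableRel G.Adj] (F : Sym2 X → ℝ) :
    ∑ x, ∑ y, (if G.Adj x y then F s(x, y) else 0) = 2 * ∑ e ∈ G.edgeFinset, F e := by
  classical
  rw [← Finset.sum_product', Finset.univ_product_univ, Finset.sum_ite, Finset.sum_const_zero,
    add_zero]
  have hmaps : ∀ p ∈ Finset.univ.filter (fun p : X × X => G.Adj p.1 p.2),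
      s(p.1, p.2) ∈ G.edgeFinset := by
    intro p hp
    rw [SimpleGraph.mem_edgeFinset, SimpleGraph.mem_edgeSet]
    exact (Finset.mem_filter.mp hp).2
  rw [← Finset.sum_fiberwise_of_maps_to hmaps]
  rw [Finset.mul_sum]
  refine Finset.sum_congr rfl ?_
  refine Sym2.ind (fun u v huv => ?_)
  have hadj : G.Adj u v := by simpa using huv
  have hne : u ≠ v := G.ne_of_adj hadj
  have hfib : (Finset.univ.filter fun p : X × X => G.Adj p.1 p.2).filter
      (fun p => s(p.1, p.2) = s(u, v)) = {(u, v), (v, u)} := by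
    ext ⟨p1, p2⟩
    simp only [Finset.mem_filter, Finset.mem_univ, true_and, Finset.mem_insert,
      Finset.mem_singleton, Sym2.eq_iff, Prod.mk.injEq]
    constructor
    · rintro ⟨hadj', (⟨rfl, rfl⟩ | ⟨rfl, rfl⟩)⟩
      · exact Or.inl ⟨rfl, rfl⟩
      · exact Or.inr ⟨rfl, rfl⟩
    · rintro (⟨rfl, rfl⟩ | ⟨rfl, rfl⟩)
      · exact ⟨hadj, Or.inl ⟨rfl, rfl⟩⟩
      · exact ⟨hadj.symm, Or.inr ⟨rfl, rfl⟩⟩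
  have hcongr : ∑ p ∈ ((Finset.univ.filter fun p : X × X => G.Adj p.1 p.2).filter
      (fun p => s(p.1, p.2) = s(u, v))), F s(p.1, p.2)
      = ∑ p ∈ ((Finset.univ.filter fun p : X × X => G.Adj p.1 p.2).filter
      (fun p => s(p.1, p.2) = s(u, v))), F s(u, v) := by
    refine Finset.sum_congr rfl fun p hp => ?_
    rw [(Finset.mem_filter.mp hp).2]
  rw [hcongr, Finset.sum_const, hfib]
  have hcard : ({(u, v), (v, u)} : Finset (X × X)).card = 2 := by
    rw [Finset.card_insert_of_notMem, Finset.card_singleton]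
    simp only [Finset.mem_singleton, Prod.mk.injEq, not_and]
    intro h; exact absurd h hne
  rw [hcard]
  simp [nsmul_eq_mul]

lemma aux_variance {X : Type*} [Fintype X] [Nonempty X] (φ : X → ℂ) :
    ∑ x, ∑ y, ‖φ x - φ y‖ ^ 2
      = 2 * (Fintype.card X : ℝ) * ∑ x, ‖φ x - (∑ y, φ y) / (Fintype.card X : ℂ)‖ ^ 2 := by
  classical
  set c : ℂ := (∑ y, φ y) / (Fintype.card X : ℂ) with hc
  set ψ : X → ℂ := fun x => φ x - c with hψ
  have hcard : (Fintype.card X : ℂ) ≠ 0 := Nat.cast_ne_zero.mpr Fintype.card_ne_zero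
  have hsum : ∑ x, ψ x = 0 := by
    simp only [hψ, Finset.sum_sub_distrib, Finset.sum_const, Finset.card_univ, nsmul_eq_mul, hc]
    field_simp
    ring
  have hnorm : ∀ z : ℂ, ‖z‖ ^ 2 = Complex.normSq z := fun z => by
    rw [Complex.sq_norm]
  have h1 : ∀ x y : X, ‖φ x - φ y‖ ^ 2 = Complex.normSq (ψ x) + Complex.normSq (ψ y)
      - 2 * (ψ x * (starRingEnd ℂ) (ψ y)).re := by
    intro x y
    have h2 : φ x - φ y = ψ x - ψ y := by simp only [hψ]; ring
    rw [h2, hnorm, Complex.normSq_sub]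
  have hA : ∑ x : X, ∑ _y : X, Complex.normSq (ψ x)
      = (Fintype.card X : ℝ) * ∑ x, Complex.normSq (ψ x) := by
    simp only [Finset.sum_const, Finset.card_univ, nsmul_eq_mul]
    rw [← Finset.mul_sum]
  have hB : ∑ _x : X, ∑ y : X, Complex.normSq (ψ y)
      = (Fintype.card X : ℝ) * ∑ x, Complex.normSq (ψ x) := by
    rw [Finset.sum_comm]; exact hA
  have hC : ∑ x, ∑ y, (ψ x * (starRingEnd ℂ) (ψ y)).re = 0 := by
    have h3 : ∑ x, ∑ y, ψ x * (starRingEnd ℂ) (ψ y) = 0 := by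
      rw [← Finset.sum_mul_sum, hsum, zero_mul]
    have h4 : ∑ x, ∑ y, (ψ x * (starRingEnd ℂ) (ψ y)).re
        = (∑ x, ∑ y, ψ x * (starRingEnd ℂ) (ψ y)).re := by
      rw [Complex.re_sum]
      exact Finset.sum_congr rfl fun x _ => (Complex.re_sum _ _).symm
    rw [h4, h3, Complex.zero_re]
  calc ∑ x, ∑ y, ‖φ x - φ y‖ ^ 2
      = ∑ x : X, ∑ y : X, (Complex.normSq (ψ x) + Complex.normSq (ψ y)
        - 2 * (ψ x * (starRingEnd ℂ) (ψ y)).re) :=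
        Finset.sum_congr rfl fun x _ => Finset.sum_congr rfl fun y _ => h1 x y
    _ = (∑ x : X, ∑ _y : X, Complex.normSq (ψ x)) + (∑ _x : X, ∑ y : X, Complex.normSq (ψ y))
        - 2 * ∑ x, ∑ y, (ψ x * (starRingEnd ℂ) (ψ y)).re := by
        simp only [Finset.sum_sub_distrib, Finset.sum_add_distrib, Finset.mul_sum]
    _ = 2 * (Fintype.card X : ℝ) * ∑ x, Complex.normSq (ψ x) := by
        rw [hA, hB, hC]; ring
    _ = 2 * (Fintype.card X : ℝ) * ∑ x, ‖φ x - c‖ ^ 2 := by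
        congr 1
        exact (Finset.sum_congr rfl fun x _ => hnorm (ψ x)).symm

open Finset

lemma aux_walk_len_nonneg {X : Type*} {G : SimpleGraph X} (b : Sym2 X → ℝ)
    (hb : ∀ e ∈ G.edgeSet, 0 < b e) {x y : X} (w : G.Walk x y) :
    0 ≤ (w.edges.map fun e => (b e)⁻¹).sum := by
  refine List.sum_nonneg fun t ht => ?_
  obtain ⟨e, he, rfl⟩ := List.mem_map.mp ht
  exact inv_nonneg.mpr (hb e (w.edges_subset_edgeSet he)).le


open Finset

/-- Discrete Poincaré inequality of Diaconis–Stroock type: let `(X,E)` be a finite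
connected graph with symmetric positive edge weights `b`, `Q(f) = (1/2)Σ b(x,y)|f(x)−f(y)|²`
the weighted Dirichlet form and `d` the diameter in the weighted path metric (edge `e`
contributing length `b(e)⁻¹`). If `Γ = (γ_{x,y})` is a family of walks, one joining each
ordered pair of vertices, with `|γ_{x,y}| ≤ α d` and every edge lying on at most `β d |X|`
of the walks, then the first non-zero eigenvalue
`μ₁ = inf { Q(φ)/‖φ − ⟨φ,φ₀⟩φ₀‖² : φ ≠ const }` satisfies `μ₁ ≥ 1/(αβd²)`. -/
theorem weighted_graph_poincare_inequality
    {X : Type*} [Fintype X] [Nonempty X] [DecidableEq X]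
    (G : SimpleGraph X) [DecidableRel G.Adj] (hconn : G.Connected)
    (b : Sym2 X → ℝ) (hb : ∀ e ∈ G.edgeSet, 0 < b e)
    (α β d : ℝ) (hα : 0 < α) (hβ : 0 < β)
    -- d is the diameter of X in the weighted path metric
    (hd : d = ⨆ p : X × X, ⨅ w : G.Walk p.1 p.2, (w.edges.map fun e => (b e)⁻¹).sum)
    (γ : ∀ x y : X, G.Walk x y)
    -- each path has weighted length at most α d
    (hlen : ∀ x y : X, ((γ x y).edges.map fun e => (b e)⁻¹).sum ≤ α * d)
    -- every edge lies on at most β d |X| of the paths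
    (hcount : ∀ e ∈ G.edgeSet,
      ((Finset.univ.filter fun p : X × X => e ∈ (γ p.1 p.2).edges).card : ℝ) ≤
        β * d * (Fintype.card X : ℝ)) :
    1 / (α * β * d ^ 2) ≤
      sInf { r : ℝ | ∃ φ : X → ℂ,
        (∑ x, ‖φ x - (∑ y, φ y) / (Fintype.card X : ℂ)‖ ^ 2) ≠ 0 ∧
        r = ((1 / 2) * ∑ x, ∑ y, if G.Adj x y then b s(x, y) * ‖φ x - φ y‖ ^ 2 else 0) /
            (∑ x, ‖φ x - (∑ y, φ y) / (Fintype.card X : ℂ)‖ ^ 2) } := by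
    classical
  set n : ℝ := (Fintype.card X : ℝ) with hn
  have hnpos : 0 < n := by
    rw [hn]; exact_mod_cast Fintype.card_pos
  have hd0 : 0 ≤ d := by
    rw [hd]
    exact Real.iSup_nonneg fun p => Real.iInf_nonneg fun w => aux_walk_len_nonneg b hb w
  -- every element of the Rayleigh set is bounded below
  have key : ∀ r ∈ { r : ℝ | ∃ φ : X → ℂ,
        (∑ x, ‖φ x - (∑ y, φ y) / (Fintype.card X : ℂ)‖ ^ 2) ≠ 0 ∧
        r = ((1 / 2) * ∑ x, ∑ y, if G.Adj x y then b s(x, y) * ‖φ x - φ y‖ ^ 2 else 0) /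
            (∑ x, ‖φ x - (∑ y, φ y) / (Fintype.card X : ℂ)‖ ^ 2) },
      1 / (α * β * d ^ 2) ≤ r := by
    rintro r ⟨φ, hV, hrQ⟩
    set V : ℝ := ∑ x, ‖φ x - (∑ y, φ y) / (Fintype.card X : ℂ)‖ ^ 2 with hVdef
    have hV0 : 0 ≤ V := Finset.sum_nonneg fun x _ => sq_nonneg _
    have hVpos : 0 < V := lt_of_le_of_ne hV0 (Ne.symm hV)
    set D1 : Sym2 X → ℝ := Sym2.lift ⟨fun u v => ‖φ u - φ v‖, fun u v => norm_sub_rev _ _⟩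
      with hD1def
    have hD1 : ∀ u v : X, D1 s(u, v) = ‖φ u - φ v‖ := fun u v => by simp [hD1def]
    have hD1nonneg : ∀ e, 0 ≤ D1 e := Sym2.ind fun u v => by rw [hD1]; exact norm_nonneg _
    set F : Sym2 X → ℝ := fun e => b e * (D1 e) ^ 2 with hF
    have hFnonneg : ∀ e ∈ G.edgeFinset, 0 ≤ F e := fun e he =>
      mul_nonneg (hb e (SimpleGraph.mem_edgeFinset.mp he)).le (sq_nonneg _)
    set Q : ℝ := ∑ e ∈ G.edgeFinset, F e with hQdef
    have hQ0 : 0 ≤ Q := Finset.sum_nonneg hFnonneg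
    have hr' : r = Q / V := by
      rw [hrQ]
      congr 1
      have h1 : ∀ x y : X, (if G.Adj x y then b s(x, y) * ‖φ x - φ y‖ ^ 2 else 0)
          = (if G.Adj x y then F s(x, y) else 0) := by
        intro x y
        by_cases h : G.Adj x y <;> simp [h, hF, hD1]
      rw [Finset.sum_congr rfl fun x _ => Finset.sum_congr rfl fun y _ => h1 x y,
        aux_double_sum_eq]
      ring
    -- the bypass edge sets
    set Tp : X → X → Finset (Sym2 X) := fun x y => ((γ x y).bypass.edges.toFinset) with hTp
    have hTsub : ∀ x y : X, Tp x y ⊆ G.edgeFinset := fun x y e he =>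
      SimpleGraph.mem_edgeFinset.mpr
        ((γ x y).bypass.edges_subset_edgeSet (List.mem_toFinset.mp he))
    have hpair : ∀ x y : X, ‖φ x - φ y‖ ^ 2 ≤ (α * d) * ∑ e ∈ Tp x y, F e := by
      intro x y
      have hnodup : (γ x y).bypass.edges.Nodup := ((γ x y).bypass_isPath).edges_nodup
      have hbpos : ∀ e ∈ Tp x y, 0 < b e := fun e he =>
        hb e ((γ x y).bypass.edges_subset_edgeSet (List.mem_toFinset.mp he))
      have t1 : ‖φ x - φ y‖ ≤ ∑ e ∈ Tp x y, D1 e := by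
        rw [hTp, List.sum_toFinset _ hnodup]
        exact aux_walk_norm_le φ D1 hD1 _
      have t2 : ‖φ x - φ y‖ ^ 2 ≤ (∑ e ∈ Tp x y, D1 e) ^ 2 := by
        have h0 := norm_nonneg (φ x - φ y)
        nlinarith
      have t3 := aux_cs (Tp x y) b D1 hbpos (fun e _ => hD1nonneg e)
      have t4 : ∑ e ∈ Tp x y, (b e)⁻¹ ≤ α * d := by
        refine le_trans (aux_sum_finset_le_list_sum (fun e => (b e)⁻¹) (γ x y).edges
          (fun e he => inv_nonneg.mpr (hb e ((γ x y).edges_subset_edgeSet he)).le)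
          (Tp x y) (fun e he => (γ x y).edges_bypass_subset (List.mem_toFinset.mp he))) ?_
        exact hlen x y
      have t5 : 0 ≤ ∑ e ∈ Tp x y, F e :=
        Finset.sum_nonneg fun e he => mul_nonneg (hbpos e he).le (sq_nonneg _)
      calc ‖φ x - φ y‖ ^ 2 ≤ (∑ e ∈ Tp x y, (b e)⁻¹) * (∑ e ∈ Tp x y, F e) := t2.trans t3
      _ ≤ (α * d) * ∑ e ∈ Tp x y, F e := mul_le_mul_of_nonneg_right t4 t5
    have hsum1 : 2 * n * V ≤ (α * d) * ∑ p : X × X, ∑ e ∈ Tp p.1 p.2, F e := by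
      rw [hn, hVdef, ← aux_variance φ]
      calc ∑ x, ∑ y, ‖φ x - φ y‖ ^ 2
          ≤ ∑ x, ∑ y, (α * d) * ∑ e ∈ Tp x y, F e :=
            Finset.sum_le_sum fun x _ => Finset.sum_le_sum fun y _ => hpair x y
        _ = (α * d) * ∑ p : X × X, ∑ e ∈ Tp p.1 p.2, F e := by
            rw [Fintype.sum_prod_type]
            simp [Finset.mul_sum]
    have hsum2 : ∑ p : X × X, ∑ e ∈ Tp p.1 p.2, F e ≤ (β * d * n) * Q := by
      have step1 : ∀ p : X × X, ∑ e ∈ Tp p.1 p.2, F e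
          = ∑ e ∈ G.edgeFinset, if e ∈ Tp p.1 p.2 then F e else 0 := by
        intro p
        rw [Finset.sum_ite_mem, Finset.inter_eq_right.mpr (hTsub p.1 p.2)]
      calc ∑ p : X × X, ∑ e ∈ Tp p.1 p.2, F e
          = ∑ p : X × X, ∑ e ∈ G.edgeFinset, if e ∈ Tp p.1 p.2 then F e else 0 :=
            Finset.sum_congr rfl fun p _ => step1 p
        _ = ∑ e ∈ G.edgeFinset, ∑ p : X × X, if e ∈ Tp p.1 p.2 then F e else 0 :=
            Finset.sum_comm
        _ ≤ ∑ e ∈ G.edgeFinset, (β * d * n) * F e := by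
            refine Finset.sum_le_sum fun e he => ?_
            rw [Finset.sum_ite, Finset.sum_const, Finset.sum_const_zero, add_zero, nsmul_eq_mul]
            have hsub : (Finset.univ.filter fun p : X × X => e ∈ Tp p.1 p.2)
                ⊆ (Finset.univ.filter fun p : X × X => e ∈ (γ p.1 p.2).edges) := by
              intro p hp
              simp only [Finset.mem_filter, Finset.mem_univ, true_and] at hp ⊢
              exact (γ p.1 p.2).edges_bypass_subset (List.mem_toFinset.mp hp)
            have hc1 : ((Finset.univ.filter fun p : X × X => e ∈ Tp p.1 p.2).card : ℝ)
                ≤ β * d * n := by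
              refine le_trans ?_ (hcount e (SimpleGraph.mem_edgeFinset.mp he))
              exact_mod_cast Finset.card_le_card hsub
            exact mul_le_mul_of_nonneg_right hc1 (hFnonneg e he)
        _ = (β * d * n) * Q := by rw [hQdef, Finset.mul_sum]
    have hmain : V ≤ (α * β * d ^ 2) * Q := by
      have h6 : 2 * n * V ≤ (α * d) * ((β * d * n) * Q) :=
        hsum1.trans (mul_le_mul_of_nonneg_left hsum2 (by positivity))
      have h8 : n * (2 * V) ≤ n * ((α * β * d ^ 2) * Q) := by ring_nf; ring_nf at h6; linarith
      have h7 : 2 * V ≤ (α * β * d ^ 2) * Q := le_of_mul_le_mul_left h8 hnpos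
      linarith
    have hcpos : 0 < α * β * d ^ 2 := by
      rcases lt_or_ge 0 (α * β * d ^ 2) with h | h
      · exact h
      · nlinarith
    rw [hr', div_le_div_iff₀ hcpos hVpos]
    nlinarith
  by_cases hcard1 : Fintype.card X = 1
  · have hsub : Subsingleton X := Fintype.card_le_one_iff_subsingleton.mp (le_of_eq hcard1)
    have hdz : d = 0 := by
      rw [hd]
      have hz : ∀ p : X × X,
          (⨅ w : G.Walk p.1 p.2, ((w.edges.map fun e => (b e)⁻¹).sum)) = 0 := by
        rintro ⟨x, y⟩
        have hyx : y = x := Subsingleton.elim y x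
        subst hyx
        apply le_antisymm
        · have hbdd : BddBelow (Set.range fun w : G.Walk y y =>
              ((w.edges.map fun e => (b e)⁻¹).sum)) := by
            refine ⟨0, ?_⟩
            rintro t ⟨w, rfl⟩
            exact aux_walk_len_nonneg b hb w
          simpa using ciInf_le hbdd (SimpleGraph.Walk.nil)
        · exact Real.iInf_nonneg fun w => aux_walk_len_nonneg b hb w
      calc (⨆ p : X × X, ⨅ w : G.Walk p.1 p.2, ((w.edges.map fun e => (b e)⁻¹).sum))
          = ⨆ _p : X × X, (0 : ℝ) := iSup_congr hz
        _ = 0 := ciSup_const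
    rw [hdz]
    simp only [ne_eq, zero_pow, mul_zero, div_zero]
    refine le_trans (le_of_eq (by norm_num)) (Real.sInf_nonneg ?_)
    rintro r ⟨φ, hV, hrQ⟩
    rw [hrQ]
    refine div_nonneg ?_ (Finset.sum_nonneg fun x _ => sq_nonneg _)
    refine mul_nonneg (by norm_num) ?_
    refine Finset.sum_nonneg fun x _ => Finset.sum_nonneg fun y _ => ?_
    by_cases h : G.Adj x y
    · simp only [h, if_true]
      exact mul_nonneg (hb _ ((SimpleGraph.mem_edgeSet G).mpr h)).le (sq_nonneg _)
    · simp [h]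
  · have h2 : 1 < Fintype.card X := by
      have := Fintype.card_pos (α := X)
      omega
    obtain ⟨x0, x1, hx01⟩ := Fintype.exists_pair_of_one_lt_card h2
    set φ0 : X → ℂ := fun z => if z = x0 then 1 else 0 with hφ0
    have hsumφ : ∑ y, φ0 y = 1 := by simp [hφ0]
    have hNC : (Fintype.card X : ℂ) ≠ 0 := Nat.cast_ne_zero.mpr Fintype.card_ne_zero
    have hterm : φ0 x0 - (∑ y, φ0 y) / (Fintype.card X : ℂ) ≠ 0 := by
      rw [hsumφ]
      simp only [hφ0, if_pos rfl]
      intro h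
      have h1 : (1 : ℂ) = 1 / (Fintype.card X : ℂ) := by
        have := sub_eq_zero.mp h
        exact this
      rw [eq_div_iff hNC, one_mul] at h1
      exact hcard1 (Nat.cast_eq_one.mp h1)
    have hV0 : (∑ x, ‖φ0 x - (∑ y, φ0 y) / (Fintype.card X : ℂ)‖ ^ 2) ≠ 0 := by
      refine ne_of_gt (Finset.sum_pos' (fun x _ => sq_nonneg _) ⟨x0, Finset.mem_univ _, ?_⟩)
      exact pow_pos (norm_pos_iff.mpr hterm) 2
    exact le_csInf ⟨_, ⟨φ0, hV0, rfl⟩⟩ key
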